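/- For any two proper k-colorings σ, η of a graph G with maximum degree Δ and k ≥ 2Δ+2, there exists a parallel recoloring schedule of length at most 4(Δ+1) transforming σ into η, where at each parallel step the set of recolored vertices is an independent set and the coloring stays proper throughout. -/

import Mathlib

open Finset

namespace RecolAux
variable {V : Type*} [Fintype V] [DecidableEq V]

/-- greedy coloring along an enumeration -/
noncomputable def gr (G : SimpleGraph V) [DecidableRel G.Adj] {n : ℕ} (e : V ≃ Fin n)
    (i : Fin n) : ℕ :=
  sInf {c : ℕ | ∀ j : Fin n, ∀ _ : j < i, G.Adj (e.symm j) (e.symm i) → gr G e j ≠ c}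
termination_by i.val
decreasing_by exact ‹j < i›

variable (G : SimpleGraph V) [DecidableRel G.Adj] {n : ℕ} (e : V ≃ Fin n)

set_option linter.unusedSectionVars false

lemma gr_eq (i : Fin n) : gr G e i =
    sInf {c : ℕ | ∀ j : Fin n, ∀ _ : j < i, G.Adj (e.symm j) (e.symm i) → gr G e j ≠ c} := by
  rw [gr]

lemma gr_set_nonempty (i : Fin n) :
    {c : ℕ | ∀ j : Fin n, ∀ _ : j < i, G.Adj (e.symm j) (e.symm i) → gr G e j ≠ c}.Nonempty := by
  set T : Finset ℕ := (univ.filter (fun j : Fin n => j < i ∧ G.Adj (e.symm j) (e.symm i))).image (gr G e) with hT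
  refine ⟨T.sup id + 1, fun j hj hadj hc => ?_⟩
  have hmem : gr G e j ∈ T := by
    simp only [hT, mem_image, mem_filter, mem_univ]
    exact ⟨j, ⟨trivial, hj, hadj⟩, rfl⟩
  have h2 := Finset.le_sup (f := id) hmem
  simp only [id_eq] at h2
  omega

lemma gr_mem (i : Fin n) :
    ∀ j : Fin n, j < i → G.Adj (e.symm j) (e.symm i) → gr G e j ≠ gr G e i := by
  have h := Nat.sInf_mem (gr_set_nonempty G e i)
  rw [← gr_eq] at h
  exact h

lemma gr_le (i : Fin n) : gr G e i ≤ G.maxDegree := by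
  set T : Finset ℕ := (univ.filter (fun j : Fin n => j < i ∧ G.Adj (e.symm j) (e.symm i))).image (gr G e) with hT
  have hcard : T.card ≤ G.maxDegree := by
    refine le_trans Finset.card_image_le ?_
    have h3 : (univ.filter (fun j : Fin n => j < i ∧ G.Adj (e.symm j) (e.symm i))).card
        ≤ (G.neighborFinset (e.symm i)).card := by
      refine Finset.card_le_card_of_injOn (fun j => e.symm j) ?_ ?_
      · intro j hj
        simp only [Finset.mem_coe, mem_filter] at hj
        simp only [Finset.mem_coe, SimpleGraph.mem_neighborFinset]
        exact hj.2.2.symm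
      · intro a _ b _ hab
        exact e.symm.injective hab
    rw [SimpleGraph.card_neighborFinset_eq_degree] at h3
    exact h3.trans (G.degree_le_maxDegree _)
  have hne : (Finset.range (G.maxDegree + 1) \ T).Nonempty := by
    rw [← Finset.card_pos]
    have h1 := Finset.le_card_sdiff T (Finset.range (G.maxDegree + 1))
    have h2 : (Finset.range (G.maxDegree + 1)).card = G.maxDegree + 1 := Finset.card_range _
    omega
  obtain ⟨c, hc⟩ := hne
  rw [Finset.mem_sdiff, Finset.mem_range] at hc
  have hcS : c ∈ {c : ℕ | ∀ j : Fin n, ∀ _ : j < i, G.Adj (e.symm j) (e.symm i) → gr G e j ≠ c} := by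
    intro j hj hadj he
    exact hc.2 (by simp only [hT, mem_image, mem_filter, mem_univ]; exact ⟨j, ⟨trivial, hj, hadj⟩, he⟩)
  rw [gr_eq]
  have := Nat.sInf_le hcS
  omega

noncomputable def pickCol (Δ k : ℕ) (c : V → Fin k) (v : V) : Fin k :=
  if h : ∃ x : Fin k, Δ + 1 ≤ x.val ∧ ∀ u, G.Adj v u → x ≠ c u then h.choose else c v

lemma pickCol_spec {Δ k : ℕ} (hd : G.maxDegree ≤ Δ) (hk : 2 * Δ + 2 ≤ k)
    (c : V → Fin k) (v : V) :
    Δ + 1 ≤ (pickCol G Δ k c v).val ∧ ∀ u, G.Adj v u → pickCol G Δ k c v ≠ c u := by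
  have h : ∃ x : Fin k, Δ + 1 ≤ x.val ∧ ∀ u, G.Adj v u → x ≠ c u := by
    set bad : Finset (Fin k) := (G.neighborFinset v).image c with hbad
    have hbc : bad.card ≤ Δ := by
      refine le_trans Finset.card_image_le ?_
      rw [SimpleGraph.card_neighborFinset_eq_degree]
      exact (G.degree_le_maxDegree v).trans hd
    set high : Finset (Fin k) := univ.filter (fun x : Fin k => Δ + 1 ≤ x.val) with hh
    have hhc : Δ + 1 ≤ high.card := by
      have hmap : ∀ i : Fin (Δ + 1), (⟨Δ + 1 + i.val, by omega⟩ : Fin k) ∈ high := by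
        intro i; simp [hh]; omega
      calc Δ + 1 = (univ : Finset (Fin (Δ + 1))).card := by simp
        _ ≤ high.card := by
            refine Finset.card_le_card_of_injOn
              (fun i : Fin (Δ + 1) => (⟨Δ + 1 + i.val, by omega⟩ : Fin k))
              (fun i _ => hmap i) ?_
            intro a _ b _ hab
            have : Δ + 1 + a.val = Δ + 1 + b.val := congrArg Fin.val hab
            exact Fin.ext (by omega)
    have hne : (high \ bad).Nonempty := by
      rw [← Finset.card_pos]
      have h1 := Finset.le_card_sdiff bad high
      omega
    obtain ⟨x, hx⟩ := hne
    rw [Finset.mem_sdiff, hh, Finset.mem_filter] at hx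
    refine ⟨x, hx.1.2, fun u hu he => hx.2 ?_⟩
    rw [hbad, Finset.mem_image]
    exact ⟨u, (SimpleGraph.mem_neighborFinset G v u).mpr hu, he.symm⟩
  rw [pickCol, dif_pos h]
  exact h.choose_spec

noncomputable def phaseA (Δ k : ℕ) (g : V → ℕ) (c0 : V → Fin k) : ℕ → V → Fin k
  | 0 => c0
  | j + 1 => fun v =>
      if g v = j then pickCol G Δ k (phaseA Δ k g c0 j) v else phaseA Δ k g c0 j v

lemma phaseA_zero (Δ k : ℕ) (g : V → ℕ) (c0 : V → Fin k) :
    phaseA G Δ k g c0 0 = c0 := rfl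

lemma phaseA_stable (Δ k : ℕ) (g : V → ℕ) (c0 : V → Fin k) {j : ℕ} {v : V}
    (h : g v ≠ j) : phaseA G Δ k g c0 (j + 1) v = phaseA G Δ k g c0 j v := by
  simp [phaseA, h]

lemma phaseA_inv {Δ k : ℕ} (hd : G.maxDegree ≤ Δ) (hk : 2 * Δ + 2 ≤ k)
    (g : V → ℕ) (hg : ∀ u v : V, G.Adj u v → g u ≠ g v)
    (c0 : V → Fin k) (hc0 : ∀ u v : V, G.Adj u v → c0 u ≠ c0 v) (j : ℕ) :
    (∀ u v : V, G.Adj u v → phaseA G Δ k g c0 j u ≠ phaseA G Δ k g c0 j v) ∧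
    (∀ v : V, g v < j → Δ + 1 ≤ (phaseA G Δ k g c0 j v).val) := by
  induction j with
  | zero => exact ⟨hc0, fun v h => absurd h (Nat.not_lt_zero _)⟩
  | succ j ih =>
    constructor
    · intro u v hadj
      by_cases hu : g u = j <;> by_cases hv : g v = j
      · exact absurd (hu.trans hv.symm) (hg u v hadj)
      · simp only [phaseA, hu, hv, if_true, if_false, if_pos, if_neg]
        exact (pickCol_spec G hd hk _ u).2 v hadj
      · simp only [phaseA, hu, hv, if_true, if_false]
        exact fun he => (pickCol_spec G hd hk _ v).2 u (G.adj_symm hadj) he.symm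
      · simp only [phaseA, hu, hv, if_false]
        exact ih.1 u v hadj
    · intro v hv
      by_cases h : g v = j
      · simp only [phaseA, h, if_pos rfl]
        exact (pickCol_spec G hd hk _ v).1
      · rw [phaseA_stable G Δ k g c0 h]
        exact ih.2 v (by omega)

end RecolAux

open RecolAux

theorem stmt6 {V : Type*} [Fintype V] [DecidableEq V] (G : SimpleGraph V)
    [DecidableRel G.Adj] (Δ k : ℕ) (hΔ : G.maxDegree = Δ) (hk : 2 * Δ + 2 ≤ k)
    (σ η : V → Fin k)
    (hσ : ∀ u v : V, G.Adj u v → σ u ≠ σ v)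
    (hη : ∀ u v : V, G.Adj u v → η u ≠ η v) :
    ∃ (ℓ : ℕ) (cs : ℕ → V → Fin k),
      ℓ ≤ 4 * (Δ + 1) ∧
      cs 0 = σ ∧ cs ℓ = η ∧
      (∀ i : ℕ, i ≤ ℓ → ∀ u v : V, G.Adj u v → cs i u ≠ cs i v) ∧
      (∀ i : ℕ, i < ℓ → ∀ x y : V,
        cs (i + 1) x ≠ cs i x → cs (i + 1) y ≠ cs i y → ¬ G.Adj x y) := by
  classical
  have hd : G.maxDegree ≤ Δ := hΔ.le
  set e : V ≃ Fin (Fintype.card V) := Fintype.equivFin V with he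
  set g : V → ℕ := fun v => gr G e (e v) with hgdef
  -- g is a proper coloring with values ≤ Δ
  have hgle : ∀ v, g v ≤ Δ := fun v => (gr_le G e (e v)).trans hd
  have hgp : ∀ u v : V, G.Adj u v → g u ≠ g v := by
    intro u v hadj
    have hne : e u ≠ e v := fun h => (G.ne_of_adj hadj) (e.injective h)
    rcases lt_or_gt_of_ne hne with h | h
    · exact gr_mem G e (e v) (e u) h (by simpa using hadj)
    · exact fun hc => gr_mem G e (e u) (e v) h (by simpa using G.adj_symm hadj) hc.symm
  have hkpos : ∀ v, g v < k := fun v => by have := hgle v; omega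
  set gf : V → Fin k := fun v => ⟨g v, hkpos v⟩ with hgf
  set A : ℕ → V → Fin k := phaseA G Δ k g σ with hA
  set DA : ℕ → V → Fin k := phaseA G Δ k g η with hDA
  have hApr := fun j => (phaseA_inv G hd hk g hgp σ hσ j).1
  have hAhi := fun j => (phaseA_inv G hd hk g hgp σ hσ j).2
  have hDpr := fun j => (phaseA_inv G hd hk g hgp η hη j).1
  have hDhi := fun j => (phaseA_inv G hd hk g hgp η hη j).2
  set m1 : V → Fin k := A (Δ + 1) with hm1
  set m2 : V → Fin k := DA (Δ + 1) with hm2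
  have hm1hi : ∀ v, Δ + 1 ≤ (m1 v).val := fun v => hAhi (Δ + 1) v (by have := hgle v; omega)
  have hm2hi : ∀ v, Δ + 1 ≤ (m2 v).val := fun v => hDhi (Δ + 1) v (by have := hgle v; omega)
  set B : ℕ → V → Fin k := fun j v => if g v < j then gf v else m1 v with hB
  set C : ℕ → V → Fin k := fun j v => if g v < j then m2 v else gf v with hC
  set cs : ℕ → V → Fin k := fun i =>
    if i ≤ Δ + 1 then A i
    else if i ≤ 2 * (Δ + 1) then B (i - (Δ + 1))
    else if i ≤ 3 * (Δ + 1) then C (i - 2 * (Δ + 1))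
    else DA (4 * (Δ + 1) - i) with hcs
  -- normalizations
  have hcs1 : ∀ i, i ≤ Δ + 1 → cs i = A i := by
    intro i hi; simp only [hcs]; rw [if_pos hi]
  have hcs2 : ∀ i, Δ + 1 ≤ i → i ≤ 2 * (Δ + 1) → cs i = B (i - (Δ + 1)) := by
    intro i hi1 hi2
    by_cases h : i ≤ Δ + 1
    · have : i = Δ + 1 := le_antisymm h hi1
      subst this
      rw [hcs1 _ le_rfl]
      funext v
      simp only [hB, Nat.sub_self]
      rw [if_neg (by omega)]
    · simp only [hcs]; rw [if_neg h, if_pos hi2]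
  have hcs3 : ∀ i, 2 * (Δ + 1) ≤ i → i ≤ 3 * (Δ + 1) → cs i = C (i - 2 * (Δ + 1)) := by
    intro i hi1 hi2
    by_cases h : i ≤ 2 * (Δ + 1)
    · have : i = 2 * (Δ + 1) := le_antisymm h hi1
      subst this
      rw [hcs2 _ (by omega) le_rfl]
      funext v
      simp only [hB, hC, Nat.sub_self]
      rw [if_pos (by have := hgle v; omega), if_neg (by omega)]
    · simp only [hcs]; rw [if_neg (by omega), if_neg h, if_pos hi2]
  have hcs4 : ∀ i, 3 * (Δ + 1) ≤ i → i ≤ 4 * (Δ + 1) → cs i = DA (4 * (Δ + 1) - i) := by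
    intro i hi1 hi2
    by_cases h : i ≤ 3 * (Δ + 1)
    · have : i = 3 * (Δ + 1) := le_antisymm h hi1
      subst this
      rw [hcs3 _ (by omega) le_rfl]
      funext v
      have h4 : 4 * (Δ + 1) - 3 * (Δ + 1) = Δ + 1 := by omega
      have h3 : 3 * (Δ + 1) - 2 * (Δ + 1) = Δ + 1 := by omega
      simp only [hC, h3, h4]
      rw [if_pos (by have := hgle v; omega)]
    · simp only [hcs]; rw [if_neg (by omega), if_neg (by omega), if_neg h]
  -- properness of B and C
  have hBpr : ∀ j, ∀ u v : V, G.Adj u v → B j u ≠ B j v := by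
    intro j u v hadj
    simp only [hB]
    by_cases hu : g u < j <;> by_cases hv : g v < j <;>
      simp only [hu, hv, if_true, if_false, if_pos, if_neg]
    · intro h; exact hgp u v hadj (congrArg Fin.val h)
    · intro h
      have h1 := congrArg Fin.val h
      have := hm1hi v; have := hgle u
      simp only [hgf] at h1; omega
    · intro h
      have h1 := congrArg Fin.val h
      have := hm1hi u; have := hgle v
      simp only [hgf] at h1; omega
    · exact hApr (Δ + 1) u v hadj
  have hCpr : ∀ j, ∀ u v : V, G.Adj u v → C j u ≠ C j v := by
    intro j u v hadj
    simp only [hC]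
    by_cases hu : g u < j <;> by_cases hv : g v < j <;>
      simp only [hu, hv, if_true, if_false, if_pos, if_neg]
    · exact hDpr (Δ + 1) u v hadj
    · intro h
      have h1 := congrArg Fin.val h
      have := hm2hi u; have := hgle v
      simp only [hgf] at h1; omega
    · intro h
      have h1 := congrArg Fin.val h
      have := hm2hi v; have := hgle u
      simp only [hgf] at h1; omega
    · intro h; exact hgp u v hadj (congrArg Fin.val h)
  -- change-set lemmas
  have hBchg : ∀ t x, B (t + 1) x ≠ B t x → g x = t := by
    intro t x h
    by_contra hne
    apply h
    simp only [hB]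
    rcases lt_or_ge (g x) t with h1 | h1
    · rw [if_pos (by omega), if_pos h1]
    · rw [if_neg (by omega), if_neg (by omega)]
  have hCchg : ∀ t x, C (t + 1) x ≠ C t x → g x = t := by
    intro t x h
    by_contra hne
    apply h
    simp only [hC]
    rcases lt_or_ge (g x) t with h1 | h1
    · rw [if_pos (by omega), if_pos h1]
    · rw [if_neg (by omega), if_neg (by omega)]
  refine ⟨4 * (Δ + 1), cs, le_rfl, ?_, ?_, ?_, ?_⟩
  · rw [hcs1 0 (by omega)]; rfl
  · rw [hcs4 _ (by omega) le_rfl, Nat.sub_self]; rfl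
  · -- properness throughout
    intro i hi
    rcases le_or_gt i (Δ + 1) with h1 | h1
    · rw [hcs1 i h1]; exact hApr i
    rcases le_or_gt i (2 * (Δ + 1)) with h2 | h2
    · rw [hcs2 i (by omega) h2]; exact hBpr _
    rcases le_or_gt i (3 * (Δ + 1)) with h3 | h3
    · rw [hcs3 i (by omega) h3]; exact hCpr _
    · rw [hcs4 i (by omega) hi]; exact hDpr _
  · -- independence of each recolored set
    intro i hi x y hx hy hadj
    have key : ∀ z : V, cs (i + 1) z ≠ cs i z → ∃ t, g z = t ∧
        (∀ w : V, cs (i + 1) w ≠ cs i w → g w = t) := by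
      intro z hz
      rcases lt_or_ge i (Δ + 1) with h1 | h1
      · have e1 : cs i = A i := hcs1 i (by omega)
        have e2 : cs (i + 1) = A (i + 1) := hcs1 _ (by omega)
        refine ⟨i, ?_, ?_⟩
        · by_contra hne
          exact hz (by rw [e1, e2, hA, phaseA_stable G Δ k g σ hne])
        · intro w hw
          by_contra hne
          exact hw (by rw [e1, e2, hA, phaseA_stable G Δ k g σ hne])
      rcases lt_or_ge i (2 * (Δ + 1)) with h2 | h2
      · have harg : i + 1 - (Δ + 1) = i - (Δ + 1) + 1 := by omega
        have e1 : cs i = B (i - (Δ + 1)) := hcs2 i h1 (by omega)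
        have e2 : cs (i + 1) = B (i - (Δ + 1) + 1) := by
          rw [hcs2 (i + 1) (by omega) (by omega), harg]
        refine ⟨i - (Δ + 1), ?_, ?_⟩
        · exact hBchg _ z (by rw [← e1, ← e2]; exact hz)
        · intro w hw
          exact hBchg _ w (by rw [← e1, ← e2]; exact hw)
      rcases lt_or_ge i (3 * (Δ + 1)) with h3 | h3
      · have harg : i + 1 - 2 * (Δ + 1) = i - 2 * (Δ + 1) + 1 := by omega
        have e1 : cs i = C (i - 2 * (Δ + 1)) := hcs3 i h2 (by omega)
        have e2 : cs (i + 1) = C (i - 2 * (Δ + 1) + 1) := by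
          rw [hcs3 (i + 1) (by omega) (by omega), harg]
        refine ⟨i - 2 * (Δ + 1), ?_, ?_⟩
        · exact hCchg _ z (by rw [← e1, ← e2]; exact hz)
        · intro w hw
          exact hCchg _ w (by rw [← e1, ← e2]; exact hw)
      · have harg : 4 * (Δ + 1) - i = 4 * (Δ + 1) - (i + 1) + 1 := by omega
        have e1 : cs i = DA (4 * (Δ + 1) - (i + 1) + 1) := by
          rw [hcs4 i h3 (by omega), harg]
        have e2 : cs (i + 1) = DA (4 * (Δ + 1) - (i + 1)) := hcs4 (i + 1) (by omega) (by omega)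
        refine ⟨4 * (Δ + 1) - (i + 1), ?_, ?_⟩
        · by_contra hne
          exact hz (by rw [e1, e2, hDA, phaseA_stable G Δ k g η hne])
        · intro w hw
          by_contra hne
          exact hw (by rw [e1, e2, hDA, phaseA_stable G Δ k g η hne])
    obtain ⟨t, hgx, hall⟩ := key x hx
    exact hgp x y hadj (hgx.trans (hall y hy).symm)
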